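/- Let A be a real m × n matrix, b ∈ ℝ^m, μ > 0 and λ > 0, and define the Lasso objective F : ℝ^n → ℝ by F(x) := μ‖Ax − b‖² + λ·Σ_{i=1}^n |x_i|. Then F is convex, and for every global minimizer x̄ of F there exist constants c > 0 and ε > 0 such that for every x ∈ ℝ^n with ‖x − x̄‖ ≤ ε and every ξ ∈ ℝ^n satisfying the subgradient inequality F(y) ≥ F(x) + ⟨ξ, y − x⟩ for all y ∈ ℝ^n, one has ‖ξ‖ ≥ c·(F(x) − F(x̄))^{1/2}. -/

import Mathlib

open scoped RealInnerProductSpace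
open Finset

lemma caratheodory_cone {ι : Type} [Fintype ι] [DecidableEq ι] {E : Type} [AddCommGroup E] [Module ℝ E]
    (a : ι → E) (t : Finset ι) (lam : ι → ℝ) (h0 : ∀ j, 0 ≤ lam j) (hsupp : ∀ j ∉ t, lam j = 0) :
    ∃ (s : Finset ι) (c : ι → ℝ), LinearIndependent ℝ (fun j : s => a j) ∧
      (∀ j, 0 ≤ c j) ∧ (∀ j ∉ s, c j = 0) ∧ ∑ j, c j • a j = ∑ j, lam j • a j := by
  induction t using Finset.strongInductionOn generalizing lam with
  | _ t ih =>
  by_cases hind : LinearIndependent ℝ (fun j : t => a j)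
  · exact ⟨t, lam, hind, h0, hsupp, rfl⟩
  · rw [Fintype.not_linearIndependent_iff] at hind
    obtain ⟨g, hg0, i₀, hgi₀⟩ := hind
    set gg : ι → ℝ := fun j => if h : j ∈ t then g ⟨j, h⟩ else 0 with hgg
    have hggsum : ∑ j, gg j • a j = 0 := by
      rw [← Finset.sum_subset (Finset.subset_univ t) (by intro j _ hj; simp [hgg, dif_neg hj])]
      rw [← Finset.sum_attach t (fun j => gg j • a j)]
      simpa [hgg] using hg0
    have hggne : gg (i₀ : ι) ≠ 0 := by simpa [hgg, dif_pos i₀.2] using hgi₀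
    have hggt : ∀ j ∉ t, gg j = 0 := by intro j hj; simp [hgg, dif_neg hj]
    set g' : ι → ℝ := if 0 < gg i₀ then gg else -gg with hg'
    have hg'sum : ∑ j, g' j • a j = 0 := by
      by_cases h : 0 < gg (i₀ : ι)
      · simpa [hg', h] using hggsum
      · simp only [hg', h, if_false]
        simp only [Pi.neg_apply, neg_smul, Finset.sum_neg_distrib, neg_eq_zero]
        exact hggsum
    have hg't : ∀ j ∉ t, g' j = 0 := by
      intro j hj
      by_cases h : 0 < gg (i₀ : ι) <;> simp [hg', h, hggt j hj]
    have hg'pos : ∃ j ∈ t, 0 < g' j := by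
      refine ⟨i₀, i₀.2, ?_⟩
      by_cases h : 0 < gg (i₀ : ι)
      · simpa [hg', h] using h
      · simp only [hg', h, if_false, Pi.neg_apply]
        rcases hggne.lt_or_gt with h' | h'
        · linarith
        · exact absurd h' h
    -- pick minimizer of lam j / g' j over positive part
    obtain ⟨jp, hjp, _⟩ := hg'pos
    have hPne : (t.filter (fun j => 0 < g' j)).Nonempty := ⟨jp, by simp [hjp, ‹0 < g' jp›]⟩
    obtain ⟨j₀, hj₀mem, hj₀min⟩ := Finset.exists_min_image _ (fun j => lam j / g' j) hPne
    rw [Finset.mem_filter] at hj₀mem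
    obtain ⟨hj₀t, hj₀pos⟩ := hj₀mem
    set τ : ℝ := lam j₀ / g' j₀ with hτ
    have hτ0 : 0 ≤ τ := div_nonneg (h0 j₀) hj₀pos.le
    set c : ι → ℝ := fun j => lam j - τ * g' j with hc
    have hc0 : ∀ j, 0 ≤ c j := by
      intro j
      by_cases hjP : j ∈ t.filter (fun j => 0 < g' j)
      · have := hj₀min j hjP
        rw [Finset.mem_filter] at hjP
        have hgj : 0 < g' j := hjP.2
        rw [div_le_div_iff₀ hj₀pos hgj] at this
        simp only [hc]
        rw [hτ]
        rw [div_mul_eq_mul_div, sub_nonneg, div_le_iff₀ hj₀pos]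
        linarith
      · have hgj : g' j ≤ 0 := by
          by_cases hjt : j ∈ t
          · by_contra hpos
            exact hjP (Finset.mem_filter.mpr ⟨hjt, by linarith [not_le.mp hpos]⟩)
          · simp [hg't j hjt]
        have : 0 ≤ -(τ * g' j) := by nlinarith
        have := h0 j
        simp only [hc]; linarith
    have hcj₀ : c j₀ = 0 := by
      simp only [hc, hτ]
      field_simp
      ring
    have hcsupp : ∀ j ∉ t.erase j₀, c j = 0 := by
      intro j hj
      rw [Finset.mem_erase] at hj
      push_neg at hj
      by_cases hjj : j = j₀
      · rw [hjj]; exact hcj₀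
      · have hjt : j ∉ t := hj hjj
        simp [hc, hsupp j hjt, hg't j hjt]
    have hcsum : ∑ j, c j • a j = ∑ j, lam j • a j := by
      simp only [hc, sub_smul, Finset.sum_sub_distrib, mul_smul]
      rw [← Finset.smul_sum, hg'sum, smul_zero, sub_zero]
    obtain ⟨s, c', h1, h2, h3, h4⟩ := ih (t.erase j₀) (Finset.erase_ssubset hj₀t) c hc0 hcsupp
    exact ⟨s, c', h1, h2, h3, h4.trans hcsum⟩
lemma fg_cone_closed {ι : Type} [Fintype ι] [DecidableEq ι] {d : ℕ} (a : ι → EuclideanSpace ℝ (Fin d)) :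
    IsClosed {y : EuclideanSpace ℝ (Fin d) | ∃ lam : ι → ℝ, (∀ j, 0 ≤ lam j) ∧ y = ∑ j, lam j • a j} := by
  classical
  have key : {y : EuclideanSpace ℝ (Fin d) | ∃ lam : ι → ℝ, (∀ j, 0 ≤ lam j) ∧ y = ∑ j, lam j • a j}
      = ⋃ s ∈ {s : Finset ι | LinearIndependent ℝ (fun j : s => a j)},
        (fun c : s → ℝ => ∑ j : s, c j • a (j : ι)) '' {c | ∀ j, 0 ≤ c j} := by
    ext y
    simp only [Set.mem_setOf_eq, Set.mem_iUnion, Set.mem_image]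
    constructor
    · rintro ⟨lam, h0, rfl⟩
      obtain ⟨s, c, hind, hc0, hcsupp, hcsum⟩ := caratheodory_cone a Finset.univ lam h0 (by simp)
      refine ⟨s, hind, fun j : s => c j, fun j => hc0 j, ?_⟩
      rw [← hcsum, Finset.sum_coe_sort s (fun j => c j • a j)]
      exact Finset.sum_subset (Finset.subset_univ s) (by intro j _ hj; simp [hcsupp j hj])
    · rintro ⟨s, _, c, hc0, rfl⟩
      refine ⟨fun j => if h : j ∈ s then c ⟨j, h⟩ else 0, ?_, ?_⟩
      · intro j; by_cases h : j ∈ s <;> simp [h]; exact hc0 _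
      · rw [← Finset.sum_subset (Finset.subset_univ s)
          (by intro j _ hj; simp [dif_neg hj])]
        rw [← Finset.sum_coe_sort s (fun j => (if h : j ∈ s then c ⟨j, h⟩ else 0) • a j)]
        exact Finset.sum_congr rfl (fun j _ => by rw [dif_pos j.2])
  rw [key]
  refine Set.Finite.isClosed_biUnion (Set.toFinite _) ?_
  rintro s hind
  let L : ({x // x ∈ s} → ℝ) →ₗ[ℝ] EuclideanSpace ℝ (Fin d) :=
    { toFun := fun c => ∑ j : s, c j • a (j : ι)
      map_add' := by intro c c'; simp [add_smul, Finset.sum_add_distrib]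
      map_smul' := by intro r c; simp [smul_smul, Finset.smul_sum] }
  have hker : LinearMap.ker L = ⊥ := by
    rw [LinearMap.ker_eq_bot']
    intro c hc
    exact funext (Fintype.linearIndependent_iff.mp hind c hc)
  have hemb := LinearMap.isClosedEmbedding_of_injective hker
  have horth : IsClosed {c : {x // x ∈ s} → ℝ | ∀ j, 0 ≤ c j} := by
    have : {c : {x // x ∈ s} → ℝ | ∀ j, 0 ≤ c j} = ⋂ j, {c | 0 ≤ c j} := by
      ext c; simp [Set.mem_iInter]
    rw [this]
    exact isClosed_iInter (fun j => isClosed_le continuous_const (continuous_apply j))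
  have himg := hemb.isClosedMap _ horth
  exact himg

lemma farkas {ι : Type} [Fintype ι] [DecidableEq ι] {d : ℕ} (a : ι → EuclideanSpace ℝ (Fin d))
    (y : EuclideanSpace ℝ (Fin d))
    (hy : ∀ u : EuclideanSpace ℝ (Fin d), (∀ j, ⟪a j, u⟫ ≤ 0) → ⟪y, u⟫ ≤ 0) :
    ∃ lam : ι → ℝ, (∀ j, 0 ≤ lam j) ∧ y = ∑ j, lam j • a j := by
  classical
  by_contra hne
  push_neg at hne
  set Cn : Set (EuclideanSpace ℝ (Fin d)) :=
    {z | ∃ lam : ι → ℝ, (∀ j, 0 ≤ lam j) ∧ z = ∑ j, lam j • a j} with hCn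
  have hclosed : IsClosed Cn := fg_cone_closed a
  have hconv : Convex ℝ Cn := by
    rintro z1 ⟨l1, h1, rfl⟩ z2 ⟨l2, h2, rfl⟩ p q hp hq hpq
    refine ⟨fun j => p * l1 j + q * l2 j, fun j => add_nonneg (mul_nonneg hp (h1 j)) (mul_nonneg hq (h2 j)), ?_⟩
    simp [add_smul, Finset.sum_add_distrib, mul_smul, Finset.smul_sum]
  have hcone : ∀ (t : ℝ), 0 ≤ t → ∀ z ∈ Cn, t • z ∈ Cn := by
    rintro t ht z ⟨lam, h0, rfl⟩
    exact ⟨fun j => t * lam j, fun j => mul_nonneg ht (h0 j), by simp [Finset.smul_sum, mul_smul]⟩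
  have hymem : y ∉ Cn := by
    rintro ⟨lam, h0, rfl⟩
    exact hne lam h0 rfl
  obtain ⟨f, u0, hfa, hfy⟩ := geometric_hahn_banach_closed_point hconv hclosed hymem
  have h0mem : (0 : EuclideanSpace ℝ (Fin d)) ∈ Cn := ⟨fun _ => 0, fun _ => le_refl _, by simp⟩
  have hu0 : 0 < u0 := by simpa using hfa 0 h0mem
  have hfle : ∀ z ∈ Cn, f z ≤ 0 := by
    intro z hz
    by_contra hpos
    push_neg at hpos
    have hmem : ((u0 + 1) / f z) • z ∈ Cn := hcone _ (by positivity) z hz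
    have := hfa _ hmem
    rw [map_smul] at this
    simp only [smul_eq_mul] at this
    rw [div_mul_cancel₀ _ (ne_of_gt hpos)] at this
    linarith
  set z0 := (InnerProductSpace.toDual ℝ (EuclideanSpace ℝ (Fin d))).symm f with hz0
  have hz0in : ∀ w, ⟪z0, w⟫ = f w := fun w => InnerProductSpace.toDual_symm_apply
  have hcon : ∀ j, ⟪a j, z0⟫ ≤ 0 := by
    intro j
    rw [real_inner_comm, hz0in]
    exact hfle (a j) ⟨fun j' => if j' = j then 1 else 0, by intro j'; positivity, by simp⟩
  have := hy z0 hcon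
  rw [real_inner_comm, hz0in] at this
  linarith
lemma coeff_bound {ι : Type} [Fintype ι] [DecidableEq ι] {d : ℕ} (a : ι → EuclideanSpace ℝ (Fin d)) :
    ∃ B > (0:ℝ), ∀ (s : Finset ι) (lam : ι → ℝ), LinearIndependent ℝ (fun j : s => a j) →
      (∀ j, 0 ≤ lam j) → (∀ j ∉ s, lam j = 0) → ∑ j, lam j ≤ B * ‖∑ j, lam j • a j‖ := by
  classical
  set Φ : Set (ι → ℝ) := ⋃ s ∈ {s : Finset ι | LinearIndependent ℝ (fun j : s => a j)},
    (stdSimplex ℝ ι ∩ {lam | ∀ j ∉ s, lam j = 0}) with hΦ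
  have hN : Continuous (fun lam : ι → ℝ => ‖∑ j, lam j • a j‖) :=
    (continuous_finset_sum _ (fun j _ => (continuous_apply j).smul continuous_const)).norm
  have hΦc : IsCompact Φ := by
    refine Set.Finite.isCompact_biUnion (Set.toFinite _) (fun s _ => ?_)
    refine (isCompact_stdSimplex ℝ ι).inter_right ?_
    have : {lam : ι → ℝ | ∀ j ∉ s, lam j = 0} = ⋂ j ∈ {j | j ∉ s}, {lam | lam j = 0} := by
      ext lam; simp [Set.mem_iInter]
    rw [this]
    exact isClosed_biInter (fun j _ => isClosed_eq (continuous_apply j) continuous_const)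
  -- key positivity on Φ
  have hpos : ∀ lam ∈ Φ, 0 < ‖∑ j, lam j • a j‖ := by
    intro lam hlam
    simp only [hΦ, Set.mem_iUnion, Set.mem_setOf_eq] at hlam
    obtain ⟨s, hind, ⟨⟨h0, hsum1⟩, hsupp⟩⟩ := hlam
    rw [norm_pos_iff]
    intro hzero
    have hz : ∑ j : {x // x ∈ s}, lam (j : ι) • a (j : ι) = 0 := by
      rw [Finset.sum_coe_sort s (fun j => lam j • a j)]
      rw [Finset.sum_subset (Finset.subset_univ s) (by intro j _ hj; simp [hsupp j hj])]
      exact hzero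
    have hall := Fintype.linearIndependent_iff.mp hind (fun j => lam (j : ι)) hz
    have : ∑ j, lam j = 0 := by
      rw [← Finset.sum_subset (Finset.subset_univ s) (by intro j _ hj; simp [hsupp j hj])]
      rw [← Finset.sum_coe_sort s lam]
      exact Finset.sum_eq_zero (fun j _ => hall j)
    rw [hsum1] at this
    norm_num at this
  by_cases hne : Φ.Nonempty
  · obtain ⟨lam₀, hlam₀, hmin⟩ := hΦc.exists_isMinOn hne hN.continuousOn
    set β := ‖∑ j, lam₀ j • a j‖ with hβ
    have hβpos : 0 < β := hpos lam₀ hlam₀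
    refine ⟨1/β + 1, by positivity, ?_⟩
    intro s lam hind h0 hsupp
    set S := ∑ j, lam j with hS
    have hSnn : 0 ≤ S := Finset.sum_nonneg (fun j _ => h0 j)
    rcases eq_or_lt_of_le hSnn with hS0 | hS0
    · rw [← hS0]; positivity
    · have hmem : (S⁻¹ • lam) ∈ Φ := by
        simp only [hΦ, Set.mem_iUnion, Set.mem_setOf_eq]
        refine ⟨s, hind, ⟨⟨fun j => mul_nonneg (le_of_lt (inv_pos.mpr hS0)) (h0 j), ?_⟩,
          fun j hj => by simp [hsupp j hj]⟩⟩
        simp only [Pi.smul_apply, smul_eq_mul, ← Finset.mul_sum, ← hS]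
        field_simp
      have := hmin hmem
      simp only [Set.mem_setOf_eq] at this
      have heq : ‖∑ j, (S⁻¹ • lam) j • a j‖ = S⁻¹ * ‖∑ j, lam j • a j‖ := by
        have : ∑ j, (S⁻¹ • lam) j • a j = S⁻¹ • ∑ j, lam j • a j := by
          rw [Finset.smul_sum]
          exact Finset.sum_congr rfl (fun j _ => by simp [mul_smul])
        rw [this, norm_smul, Real.norm_eq_abs, abs_of_pos (inv_pos.mpr hS0)]
      have hβle : β ≤ S⁻¹ * ‖∑ j, lam j • a j‖ := by
        rw [← heq]; exact hmin hmem
      have : S * β ≤ ‖∑ j, lam j • a j‖ := by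
        rw [inv_mul_eq_div, le_div_iff₀ hS0] at hβle
        linarith
      calc S ≤ (1/β) * (S * β) := by field_simp; exact le_rfl
        _ ≤ (1/β) * ‖∑ j, lam j • a j‖ := by
            apply mul_le_mul_of_nonneg_left this (by positivity)
        _ ≤ (1/β + 1) * ‖∑ j, lam j • a j‖ := by nlinarith [norm_nonneg (∑ j, lam j • a j)]
  · refine ⟨1, one_pos, ?_⟩
    intro s lam hind h0 hsupp
    set S := ∑ j, lam j with hS
    have hSnn : 0 ≤ S := Finset.sum_nonneg (fun j _ => h0 j)
    rcases eq_or_lt_of_le hSnn with hS0 | hS0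
    · rw [← hS0]; positivity
    · exfalso
      apply hne
      refine ⟨S⁻¹ • lam, ?_⟩
      simp only [hΦ, Set.mem_iUnion, Set.mem_setOf_eq]
      refine ⟨s, hind, ⟨⟨fun j => mul_nonneg (le_of_lt (inv_pos.mpr hS0)) (h0 j), ?_⟩,
        fun j hj => by simp [hsupp j hj]⟩⟩
      simp only [Pi.smul_apply, smul_eq_mul, ← Finset.mul_sum, ← hS]
      field_simp

lemma hoffman {ι : Type} [Fintype ι] [DecidableEq ι] {d : ℕ} (a : ι → EuclideanSpace ℝ (Fin d)) :
    ∃ C > (0:ℝ), ∀ u : EuclideanSpace ℝ (Fin d), ∃ k : EuclideanSpace ℝ (Fin d),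
      (∀ j, ⟪a j, k⟫ ≤ 0) ∧ ‖u - k‖ ≤ ‖u‖ ∧ ‖u - k‖ ≤ C * ∑ j, max (⟪a j, u⟫) 0 := by
  classical
  obtain ⟨B, hB, hBspec⟩ := coeff_bound a
  refine ⟨B + 1, by linarith, fun u => ?_⟩
  set K : Set (EuclideanSpace ℝ (Fin d)) := {k | ∀ j, ⟪a j, k⟫ ≤ 0} with hK
  have h0K : (0 : EuclideanSpace ℝ (Fin d)) ∈ K := by
    intro j; simp
  have hKconv : Convex ℝ K := by
    intro x hx y' hy' p q hp hq hpq
    intro j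
    rw [inner_add_right, real_inner_smul_right, real_inner_smul_right]
    nlinarith [hx j, hy' j]
  have hKclosed : IsClosed K := by
    have : K = ⋂ j, {k | ⟪a j, k⟫ ≤ 0} := by ext k; simp [hK, Set.mem_iInter]
    rw [this]
    exact isClosed_iInter (fun j =>
      isClosed_le (continuous_const.inner continuous_id) continuous_const)
  obtain ⟨p, hpK, hpmin⟩ :=
    exists_norm_eq_iInf_of_complete_convex ⟨0, h0K⟩ hKclosed.isComplete hKconv u
  have hchar := (norm_eq_iInf_iff_real_inner_le_zero hKconv hpK).mp hpmin
  set y := u - p with hy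
  have hyp0 : ⟪y, p⟫ = 0 := by
    have h1 : ⟪y, (0:EuclideanSpace ℝ (Fin d)) - p⟫ ≤ 0 := hchar 0 h0K
    have h2p : ((2:ℝ) • p) ∈ K := by
      intro j; rw [real_inner_smul_right]; nlinarith [hpK j]
    have h2 : ⟪y, (2:ℝ) • p - p⟫ ≤ 0 := hchar _ h2p
    rw [zero_sub, inner_neg_right] at h1
    have h2' : (2:ℝ) • p - p = p := by
      rw [two_smul]; abel
    rw [h2'] at h2
    linarith
  have hyK : ∀ k ∈ K, ⟪y, k⟫ ≤ 0 := by
    intro k hk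
    have := hchar k hk
    rw [inner_sub_right] at this
    linarith
  obtain ⟨lam', hlam'0, hyeq'⟩ := farkas a y hyK
  obtain ⟨s, c, hind, hc0, hcsupp, hcsum⟩ := caratheodory_cone a Finset.univ lam' hlam'0 (by simp)
  have hyeq : y = ∑ j, c j • a j := by rw [hyeq', ← hcsum]
  set S := ∑ j, c j with hS
  have hSB : S ≤ B * ‖y‖ := by
    rw [hyeq]; exact hBspec s c hind hc0 hcsupp
  have hnormsq : ‖y‖ ^ 2 = ⟪u, y⟫ := by
    rw [← real_inner_self_eq_norm_sq]
    have : ⟪y, y⟫ = ⟪y, u⟫ - ⟪y, p⟫ := by rw [← inner_sub_right]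
    rw [this, hyp0, sub_zero, real_inner_comm]
  have hsmax : (0:ℝ) ≤ ∑ j, max (⟪a j, u⟫) 0 :=
    Finset.sum_nonneg (fun j _ => le_max_right _ _)
  have hinner : ⟪u, y⟫ ≤ S * ∑ j, max (⟪a j, u⟫) 0 := by
    rw [hyeq, inner_sum]
    have : ∀ j, ⟪u, c j • a j⟫ ≤ c j * max (⟪a j, u⟫) 0 := by
      intro j
      rw [real_inner_smul_right]
      apply mul_le_mul_of_nonneg_left _ (hc0 j)
      rw [real_inner_comm]
      exact le_max_left _ _
    calc ∑ j, ⟪u, c j • a j⟫ ≤ ∑ j, c j * max (⟪a j, u⟫) 0 :=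
          Finset.sum_le_sum (fun j _ => this j)
      _ ≤ ∑ j, S * max (⟪a j, u⟫) 0 := by
          apply Finset.sum_le_sum
          intro j _
          apply mul_le_mul_of_nonneg_right _ (le_max_right _ _)
          exact Finset.single_le_sum (fun i (_ : i ∈ Finset.univ) => hc0 i) (Finset.mem_univ j)
      _ = S * ∑ j, max (⟪a j, u⟫) 0 := by rw [← Finset.mul_sum]
  have hyu : ‖y‖ ^ 2 ≤ ‖u‖ * ‖y‖ := by
    rw [hnormsq]
    exact le_trans (real_inner_le_norm u y) (le_of_eq rfl)
  have hyu' : ‖y‖ ≤ ‖u‖ := by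
    rcases eq_or_lt_of_le (norm_nonneg y) with h | h
    · rw [← h]; exact norm_nonneg u
    · nlinarith
  have hfinal : ‖y‖ ≤ (B + 1) * ∑ j, max (⟪a j, u⟫) 0 := by
    rcases eq_or_lt_of_le (norm_nonneg y) with h | h
    · rw [← h]; positivity
    · have h1 : ‖y‖ ^ 2 ≤ B * ‖y‖ * ∑ j, max (⟪a j, u⟫) 0 := by
        rw [hnormsq]
        calc ⟪u, y⟫ ≤ S * ∑ j, max (⟪a j, u⟫) 0 := hinner
          _ ≤ B * ‖y‖ * ∑ j, max (⟪a j, u⟫) 0 :=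
              mul_le_mul_of_nonneg_right hSB hsmax
      have h2 : ‖y‖ ≤ B * ∑ j, max (⟪a j, u⟫) 0 := by nlinarith
      nlinarith
  exact ⟨p, hpK, by rw [← hy] at *; exact hyu', by rw [← hy] at *; exact hfinal⟩
-- helper: coordinate bounded by norm
lemma abs_coord_le_norm {n : ℕ} (x : EuclideanSpace ℝ (Fin n)) (i : Fin n) : |x i| ≤ ‖x‖ := by
  rw [EuclideanSpace.norm_eq]
  simp only [Real.norm_eq_abs, sq_abs]
  rw [← Real.sqrt_sq_eq_abs]
  apply Real.sqrt_le_sqrt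
  exact Finset.single_le_sum (f := fun i => x i ^ 2) (fun j _ => sq_nonneg _) (Finset.mem_univ i)

set_option maxHeartbeats 2000000 in
/-- The Lasso objective `F(x) = μ‖Ax − b‖² + λ‖x‖₁` is convex and
satisfies the KL inequality with exponent `1/2` around every global minimizer. -/
theorem lasso_KL_exponent_half
    (m n : ℕ) (A : Matrix (Fin m) (Fin n) ℝ) (b : Fin m → ℝ)
    (μ lam : ℝ) (hμ : 0 < μ) (hlam : 0 < lam) :
    let F : EuclideanSpace ℝ (Fin n) → ℝ :=
      fun x => μ * ∑ j, (A.mulVec x j - b j) ^ 2 + lam * ∑ i, |x i|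
    ConvexOn ℝ Set.univ F ∧
    ∀ xbar : EuclideanSpace ℝ (Fin n), (∀ x, F xbar ≤ F x) →
      ∃ c > (0 : ℝ), ∃ ε > (0 : ℝ),
        ∀ x : EuclideanSpace ℝ (Fin n), ‖x - xbar‖ ≤ ε →
          ∀ ξ : EuclideanSpace ℝ (Fin n),
            (∀ y : EuclideanSpace ℝ (Fin n), F x + ⟪ξ, y - x⟫ ≤ F y) →
            c * Real.sqrt (F x - F xbar) ≤ ‖ξ‖ := by
  intro F
  have hFdef : ∀ x : EuclideanSpace ℝ (Fin n),
      F x = μ * ∑ j, (A.mulVec x j - b j) ^ 2 + lam * ∑ i, |x i| := fun x => rfl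
  constructor
  · -- convexity
    refine ⟨convex_univ, ?_⟩
    intro x _ y _ p q hp hq hpq
    rw [hFdef, hFdef, hFdef]
    simp only [smul_eq_mul]
    have hmv : ∀ j, A.mulVec (p • x + q • y) j = p * A.mulVec x j + q * A.mulVec y j := by
      intro j
      rw [Matrix.mulVec_add, Matrix.mulVec_smul, Matrix.mulVec_smul]
      simp
    have h1 : ∑ j, (A.mulVec (p • x + q • y) j - b j) ^ 2
        ≤ p * ∑ j, (A.mulVec x j - b j) ^ 2 + q * ∑ j, (A.mulVec y j - b j) ^ 2 := by
      rw [Finset.mul_sum, Finset.mul_sum, ← Finset.sum_add_distrib]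
      apply Finset.sum_le_sum
      intro j _
      rw [hmv j]
      have hq' : q = 1 - p := by linarith
      subst hq'
      nlinarith [mul_nonneg (mul_nonneg hp hq) (sq_nonneg (A.mulVec x j - A.mulVec y j))]
    have h2 : ∑ i, |(p • x + q • y) i| ≤ p * ∑ i, |x i| + q * ∑ i, |y i| := by
      rw [Finset.mul_sum, Finset.mul_sum, ← Finset.sum_add_distrib]
      apply Finset.sum_le_sum
      intro i _
      have : (p • x + q • y) i = p * x i + q * y i := by
        rw [PiLp.add_apply, PiLp.smul_apply, PiLp.smul_apply]; simp
      rw [this]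
      calc |p * x i + q * y i| ≤ |p * x i| + |q * y i| := abs_add_le _ _
        _ = p * |x i| + q * |y i| := by
            rw [abs_mul, abs_mul, abs_of_nonneg hp, abs_of_nonneg hq]
    have e1 := mul_le_mul_of_nonneg_left h1 (le_of_lt hμ)
    have e2 := mul_le_mul_of_nonneg_left h2 (le_of_lt hlam)
    simp only [WithLp.ofLp_add, WithLp.ofLp_smul] at *
    nlinarith
  · intro xbar hminx
    classical
    set v : Fin m → ℝ := fun j => A.mulVec xbar j - b j with hv
    set w : Fin n → ℝ := fun i => 2 * μ * ∑ j, v j * A j i with hwdef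
    set φ : Fin n → ℝ → ℝ := fun i s => w i * s + lam * (|xbar i + s| - |xbar i|) with hφdef
    -- key identity
    have hkey : ∀ z : EuclideanSpace ℝ (Fin n),
        F z - F xbar = μ * ∑ j, (A.mulVec (z - xbar) j) ^ 2 + ∑ i, φ i (z i - xbar i) := by
      intro z
      have hmv : ∀ j, A.mulVec z j - b j = A.mulVec (z - xbar) j + v j := by
        intro j
        have h := Matrix.mulVec_sub A z xbar
        have h2 : A.mulVec (z - xbar) j = A.mulVec z j - A.mulVec xbar j := by
          rw [h]; simp
        rw [h2, hv]
        ring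
      have hwsum : ∑ i, w i * (z i - xbar i) = 2 * μ * ∑ j, v j * A.mulVec (z - xbar) j := by
        simp only [hwdef]
        have step : ∀ j, v j * A.mulVec (z - xbar) j = ∑ i, v j * A j i * (z i - xbar i) := by
          intro j
          rw [Matrix.mulVec, dotProduct, Finset.mul_sum]
          refine Finset.sum_congr rfl (fun i _ => ?_)
          rw [Pi.sub_apply]
          ring
        rw [Finset.sum_congr rfl (fun j _ => step j), Finset.sum_comm, Finset.mul_sum]
        refine Finset.sum_congr rfl (fun i _ => ?_)
        rw [mul_assoc, Finset.sum_mul]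
      have hφsum : ∑ i, φ i (z i - xbar i)
          = ∑ i, w i * (z i - xbar i) + (lam * ∑ i, |z i| - lam * ∑ i, |xbar i|) := by
        simp only [hφdef]
        have step : ∀ i, w i * (z i - xbar i) + lam * (|xbar i + (z i - xbar i)| - |xbar i|)
            = w i * (z i - xbar i) + (lam * |z i| - lam * |xbar i|) := by
          intro i
          rw [add_sub_cancel]
          ring
        rw [Finset.sum_congr rfl (fun i _ => step i), Finset.sum_add_distrib,
          Finset.sum_sub_distrib, Finset.mul_sum, Finset.mul_sum]
      have hexp : ∑ j, (A.mulVec z j - b j) ^ 2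
          = ∑ j, ((A.mulVec (z - xbar) j) ^ 2 + 2 * (v j * A.mulVec (z - xbar) j) + v j ^ 2) := by
        refine Finset.sum_congr rfl (fun j _ => ?_)
        rw [hmv j]
        ring
      have hsplit : ∑ j, ((A.mulVec (z - xbar) j) ^ 2 + 2 * (v j * A.mulVec (z - xbar) j) + v j ^ 2)
          = ∑ j, (A.mulVec (z - xbar) j) ^ 2 + 2 * ∑ j, v j * A.mulVec (z - xbar) j
            + ∑ j, v j ^ 2 := by
        rw [Finset.sum_add_distrib, Finset.sum_add_distrib, ← Finset.mul_sum]
      have hFxbar : F xbar = μ * ∑ j, v j ^ 2 + lam * ∑ i, |xbar i| := by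
        rw [hFdef]
      rw [hFdef z, hexp, hsplit, hFxbar, hφsum, hwsum]
      ring
    have hφ0 : ∀ i, φ i 0 = 0 := by intro i; simp [hφdef]
    have hgapnn : ∀ z, 0 ≤ F z - F xbar := fun z => sub_nonneg.mpr (hminx z)
    -- φ lower bound from minimality along coordinates
    have hsingle : ∀ (i : Fin n) (s : ℝ),
        μ * ((∑ j, (A j i) ^ 2) * s ^ 2) + φ i s = F (xbar + EuclideanSpace.single i s) - F xbar := by
      intro i s
      rw [hkey (xbar + EuclideanSpace.single i s)]
      have h1 : (xbar + EuclideanSpace.single i s) - xbar = EuclideanSpace.single i s := by abel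
      rw [← WithLp.ofLp_sub, h1]
      have hmvs : ∀ j, A.mulVec (EuclideanSpace.single i s) j = A j i * s := by
        intro j
        rw [Matrix.mulVec, dotProduct]
        rw [Finset.sum_eq_single i (fun k _ hk => by
          rw [EuclideanSpace.single_apply]; simp [hk]) (fun h => absurd (Finset.mem_univ i) h)]
        rw [EuclideanSpace.single_apply]; simp
      have h3 : ∑ j, (A.mulVec (EuclideanSpace.single i s)) j ^ 2 = (∑ j, (A j i) ^ 2) * s ^ 2 := by
        rw [Finset.sum_mul]
        refine Finset.sum_congr rfl (fun j _ => ?_)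
        rw [hmvs j]; ring
      have hco : ∀ i', (xbar + EuclideanSpace.single i s) i' - xbar i' = EuclideanSpace.single i s i' := by
        intro i'; rw [PiLp.add_apply]; ring
      have h4 : ∑ i', φ i' ((xbar + EuclideanSpace.single i s) i' - xbar i') = φ i s := by
        rw [Finset.sum_congr rfl (fun i' _ => by rw [hco i'])]
        rw [Finset.sum_eq_single i (fun i' _ hne => by
          rw [EuclideanSpace.single_apply]; simp [hne, hφ0]) (fun h => absurd (Finset.mem_univ i) h)]
        rw [EuclideanSpace.single_apply]; simp
      rw [h3, h4]
    have hφlow : ∀ i s, -(μ * ((∑ j, (A j i) ^ 2) * s ^ 2)) ≤ φ i s := by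
      intro i s
      have h := hgapnn (xbar + EuclideanSpace.single i s)
      rw [← hsingle i s] at h
      linarith
    have hscale : ∀ (i : Fin n) (s t : ℝ), 0 ≤ t → t ≤ 1 → φ i (t * s) ≤ t * φ i s := by
      intro i s t ht ht1
      simp only [hφdef]
      have habs : |xbar i + t * s| ≤ (1 - t) * |xbar i| + t * |xbar i + s| := by
        have he : xbar i + t * s = (1 - t) * xbar i + t * (xbar i + s) := by ring
        rw [he]
        calc |(1 - t) * xbar i + t * (xbar i + s)|
            ≤ |(1 - t) * xbar i| + |t * (xbar i + s)| := abs_add_le _ _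
          _ = (1 - t) * |xbar i| + t * |xbar i + s| := by
              rw [abs_mul, abs_mul, abs_of_nonneg (by linarith : (0:ℝ) ≤ 1 - t),
                abs_of_nonneg ht]
      nlinarith [habs]
    have hφnn : ∀ (i : Fin n) (s : ℝ), 0 ≤ φ i s := by
      intro i s
      by_contra hneg
      push_neg at hneg
      set Q := μ * (∑ j, (A j i) ^ 2) with hQ
      have hQ0 : 0 ≤ Q := mul_nonneg (le_of_lt hμ) (Finset.sum_nonneg (fun j _ => sq_nonneg _))
      have key : ∀ t : ℝ, 0 < t → t ≤ 1 → -(Q * s ^ 2 * t) ≤ φ i s := by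
        intro t ht0 ht1
        have h1 := hscale i s t (le_of_lt ht0) ht1
        have h2 := hφlow i (t * s)
        have h3 : μ * ((∑ j, (A j i) ^ 2) * (t * s) ^ 2) = Q * s ^ 2 * t ^ 2 := by
          rw [hQ]; ring
        rw [h3] at h2
        -- t * φ i s ≥ φ i (t*s) ≥ -(Q s² t²)
        have h4 : -(Q * s ^ 2 * t ^ 2) ≤ t * φ i s := le_trans h2 h1
        have h5 : t * (-(Q * s ^ 2 * t)) ≤ t * φ i s := by
          calc t * (-(Q * s ^ 2 * t)) = -(Q * s ^ 2 * t ^ 2) := by ring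
            _ ≤ t * φ i s := h4
        exact le_of_mul_le_mul_left h5 ht0
      set Q2 := Q * s ^ 2 with hQ2
      have hQ20 : 0 ≤ Q2 := mul_nonneg hQ0 (sq_nonneg _)
      rcases eq_or_lt_of_le hQ20 with hQz | hQz
      · have h := key 1 one_pos le_rfl
        rw [← hQz] at h
        simp at h
        linarith
      · have hdivpos : 0 < -(φ i s) / (2 * Q2) := div_pos (neg_pos.mpr hneg) (by linarith)
        set t0 : ℝ := min 1 (-(φ i s) / (2 * Q2)) with ht0def
        have ht0 : 0 < t0 := lt_min one_pos hdivpos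
        have h := key t0 ht0 (min_le_left _ _)
        have hle : t0 ≤ -(φ i s) / (2 * Q2) := min_le_right _ _
        have hmul := mul_le_mul_of_nonneg_left hle (le_of_lt hQz)
        have heq : Q2 * (-(φ i s) / (2 * Q2)) = -(φ i s) / 2 := by
          field_simp
        rw [heq] at hmul
        clear_value t0 Q2 Q
        generalize hY : φ i s = Y at h hmul hneg
        linarith
    -- KKT facts
    have hkkt1 : ∀ i, 0 < xbar i → w i = -lam := by
      intro i hx
      have h1 := hφnn i (xbar i)
      have h2 := hφnn i (-(xbar i))
      simp only [hφdef] at h1 h2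
      rw [abs_of_pos hx] at h1 h2
      rw [abs_of_pos (by linarith : 0 < xbar i + xbar i)] at h1
      rw [add_neg_cancel, abs_zero] at h2
      have hprod : (w i + lam) * xbar i = 0 := le_antisymm (by nlinarith) (by nlinarith)
      rcases mul_eq_zero.mp hprod with h | h
      · linarith
      · exact absurd h (ne_of_gt hx)
    have hkkt2 : ∀ i, xbar i < 0 → w i = lam := by
      intro i hx
      have h1 := hφnn i (xbar i)
      have h2 := hφnn i (-(xbar i))
      simp only [hφdef] at h1 h2
      rw [abs_of_neg hx] at h1 h2
      rw [abs_of_neg (by linarith : xbar i + xbar i < 0)] at h1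
      rw [add_neg_cancel, abs_zero] at h2
      have hprod : (w i - lam) * xbar i = 0 := le_antisymm (by nlinarith) (by nlinarith)
      rcases mul_eq_zero.mp hprod with h | h
      · linarith
      · exact absurd h (ne_of_lt hx)
    have hkkt3 : ∀ i, xbar i = 0 → |w i| ≤ lam := by
      intro i hx
      have h1 := hφnn i 1
      have h2 := hφnn i (-1)
      simp only [hφdef, hx] at h1 h2
      norm_num at h1 h2
      rw [abs_le]
      constructor <;> linarith
    -- radius r and constant γ
    set rset : Finset ℝ :=
      insert (1 : ℝ) ((Finset.univ.filter (fun i => xbar i ≠ 0)).image (fun i => |xbar i|)) with hrset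
    set r : ℝ := rset.min' ⟨1, Finset.mem_insert_self _ _⟩ with hrdef
    have hrpos : 0 < r := by
      have hmem := Finset.min'_mem rset ⟨1, Finset.mem_insert_self _ _⟩
      rw [← hrdef] at hmem
      rw [hrset] at hmem
      rcases Finset.mem_insert.mp hmem with h | h
      · rw [h]; norm_num
      · obtain ⟨i, hi, hie⟩ := Finset.mem_image.mp h
        rw [Finset.mem_filter] at hi
        rw [← hie]
        exact abs_pos.mpr hi.2
    have hrle : ∀ i, xbar i ≠ 0 → r ≤ |xbar i| := by
      intro i hi
      apply Finset.min'_le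
      rw [hrset]
      exact Finset.mem_insert_of_mem (Finset.mem_image.mpr ⟨i, Finset.mem_filter.mpr ⟨Finset.mem_univ i, hi⟩, rfl⟩)
    set γset : Finset ℝ :=
      insert lam ((Finset.univ.filter (fun i => |w i| < lam)).image (fun i => lam - |w i|)) with hγset
    set γ : ℝ := γset.min' ⟨lam, Finset.mem_insert_self _ _⟩ with hγdef
    have hγpos : 0 < γ := by
      have hmem := Finset.min'_mem γset ⟨lam, Finset.mem_insert_self _ _⟩
      rw [← hγdef] at hmem
      rw [hγset] at hmem
      rcases Finset.mem_insert.mp hmem with h | h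
      · rw [h]; exact hlam
      · obtain ⟨i, hi, hie⟩ := Finset.mem_image.mp h
        rw [Finset.mem_filter] at hi
        rw [← hie]
        linarith [hi.2]
    have hγlam : γ ≤ lam := Finset.min'_le _ _ (by rw [hγset]; exact Finset.mem_insert_self _ _)
    have hγle : ∀ i, |w i| < lam → γ ≤ lam - |w i| := by
      intro i hi
      apply Finset.min'_le
      rw [hγset]
      exact Finset.mem_insert_of_mem (Finset.mem_image.mpr ⟨i, Finset.mem_filter.mpr ⟨Finset.mem_univ i, hi⟩, rfl⟩)
    clear_value r γ
    set ε : ℝ := r / 3 with hεdef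
    have hεpos : 0 < ε := by rw [hεdef]; linarith
    -- inner product helpers
    have hip : ∀ z u' : EuclideanSpace ℝ (Fin n), ⟪z, u'⟫ = ∑ i, z i * u' i := by
      intro z u'
      rw [PiLp.inner_apply]
      refine Finset.sum_congr rfl (fun i _ => ?_)
      simp [RCLike.inner_apply]; ring
    set ei : Fin n → EuclideanSpace ℝ (Fin n) := fun i => EuclideanSpace.single i 1 with heidef
    set row : Fin m → EuclideanSpace ℝ (Fin n) := fun j => WithLp.toLp 2 (fun i => A j i) with hrowdef
    have hinrow : ∀ (j : Fin m) (u' : EuclideanSpace ℝ (Fin n)), ⟪row j, u'⟫ = A.mulVec u' j := by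
      intro j u'
      rw [hip, Matrix.mulVec, dotProduct]
    have hinei : ∀ (i : Fin n) (u' : EuclideanSpace ℝ (Fin n)), ⟪ei i, u'⟫ = u' i := by
      intro i u'
      have hei : ∀ i', ei i i' = if i' = i then 1 else 0 := by
        intro i'
        rw [heidef]
        exact EuclideanSpace.single_apply i 1 i'
      rw [hip]
      rw [Finset.sum_eq_single i (fun i' _ hne => by rw [hei i']; simp [hne])
        (fun h => absurd (Finset.mem_univ i) h)]
      rw [hei i]
      simp
    -- the constraint family
    set afam : ((Fin m ⊕ Fin m) ⊕ (Fin n ⊕ Fin n)) → EuclideanSpace ℝ (Fin n) :=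
      Sum.elim (Sum.elim (fun j => row j) (fun j => -(row j)))
        (Sum.elim
          (fun i => if xbar i = 0 then (if w i = -lam then -(ei i) else ei i) else 0)
          (fun i => if xbar i = 0 ∧ |w i| < lam then -(ei i) else 0)) with hafam
    obtain ⟨CH, hCH, hhoff⟩ := hoffman afam
    set Kc : ℝ := (m : ℝ) / Real.sqrt μ + Real.sqrt ((n : ℝ) * ε / γ) + 1 with hKcdef
    have hKc1 : 1 ≤ Kc := by
      rw [hKcdef]
      have h1 : 0 ≤ (m : ℝ) / Real.sqrt μ := by positivity
      have h2 : 0 ≤ Real.sqrt ((n : ℝ) * ε / γ) := Real.sqrt_nonneg _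
      linarith
    have hKcpos : 0 < Kc := by linarith
    refine ⟨(CH * Kc)⁻¹, inv_pos.mpr (mul_pos hCH hKcpos), ε, hεpos, ?_⟩
    intro x hx ξ hsub
    set u : EuclideanSpace ℝ (Fin n) := x - xbar with hudef
    have hun : ‖u‖ ≤ ε := hx
    obtain ⟨k, hkK, hkle, hkbound⟩ := hhoff u
    set gap : ℝ := F x - F xbar with hgapdef
    have hgap0 : 0 ≤ gap := hgapnn x
    -- facts about k
    have hAk : ∀ j, A.mulVec k j = 0 := by
      intro j
      have h1 := hkK (Sum.inl (Sum.inl j))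
      have h2 := hkK (Sum.inl (Sum.inr j))
      rw [hafam] at h1 h2
      simp only [Sum.elim_inl, Sum.elim_inr] at h1 h2
      rw [hinrow] at h1
      rw [inner_neg_left, hinrow] at h2
      linarith
    have hknorm : ∀ i, |k i| ≤ 2 * ε := by
      intro i
      calc |k i| ≤ ‖k‖ := abs_coord_le_norm k i
        _ = ‖u - (u - k)‖ := by congr 1; abel
        _ ≤ ‖u‖ + ‖u - k‖ := norm_sub_le _ _
        _ ≤ ε + ε := add_le_add hun (le_trans hkle hun)
        _ = 2 * ε := by ring
    have hkzero : ∀ i, xbar i ≠ 0 → |k i| < |xbar i| := by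
      intro i hi
      calc |k i| ≤ 2 * ε := hknorm i
        _ < r := by rw [hεdef]; linarith
        _ ≤ |xbar i| := hrle i hi
    -- F (xbar + k) = F xbar
    have hφk : ∀ i, φ i (k i) = 0 := by
      intro i
      rcases lt_trichotomy (xbar i) 0 with hxb | hxb | hxb
      · have hwi := hkkt2 i hxb
        have hki := hkzero i (ne_of_lt hxb)
        rw [abs_of_neg hxb] at hki
        have habs := abs_lt.mp hki
        simp only [hφdef]
        rw [abs_of_neg hxb, abs_of_neg (by linarith : xbar i + k i < 0), hwi]
        ring
      · -- xbar i = 0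
        have h1 := hkK (Sum.inr (Sum.inl i))
        have h2 := hkK (Sum.inr (Sum.inr i))
        rw [hafam] at h1 h2
        simp only [Sum.elim_inl, Sum.elim_inr] at h1 h2
        rw [if_pos hxb] at h1
        have hwle := hkkt3 i hxb
        rcases lt_or_eq_of_le hwle with hwlt | hweq
        · have hne : w i ≠ -lam := by
            intro h
            rw [h, abs_neg, abs_of_pos hlam] at hwlt
            exact lt_irrefl _ hwlt
          rw [if_neg hne, hinei] at h1
          rw [if_pos ⟨hxb, hwlt⟩, inner_neg_left, hinei] at h2
          have hk0 : k i = 0 := le_antisymm h1 (by linarith)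
          rw [hk0, hφ0]
        · -- |w i| = lam
          rcases abs_eq (le_of_lt hlam) |>.mp hweq with hwp | hwm
          · have hne : w i ≠ -lam := by rw [hwp]; intro h; linarith
            rw [if_neg hne, hinei] at h1
            simp only [hφdef]
            rw [hxb, zero_add, abs_zero, abs_of_nonpos h1, hwp]
            ring
          · rw [if_pos hwm, inner_neg_left, hinei] at h1
            simp only [hφdef]
            rw [hxb, zero_add, abs_zero, abs_of_nonneg (by linarith : 0 ≤ k i), hwm]
            ring
      · have hwi := hkkt1 i hxb
        have hki := hkzero i (ne_of_gt hxb)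
        rw [abs_of_pos hxb] at hki
        have habs := abs_lt.mp hki
        simp only [hφdef]
        rw [abs_of_pos hxb, abs_of_pos (by linarith : 0 < xbar i + k i), hwi]
        ring
    have hFk : F (xbar + k) = F xbar := by
      have h := hkey (xbar + k)
      have h1 : (xbar + k) - xbar = k := by abel
      rw [← WithLp.ofLp_sub (x := xbar + k) (y := xbar), h1] at h
      have hz1 : ∑ j, (A.mulVec k j) ^ 2 = 0 :=
        Finset.sum_eq_zero (fun j _ => by rw [hAk j]; ring)
      have hco : ∀ i, (xbar + k) i - xbar i = k i := by
        intro i; rw [PiLp.add_apply]; ring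
      have hz2 : ∑ i, φ i ((xbar + k) i - xbar i) = 0 :=
        Finset.sum_eq_zero (fun i _ => by rw [hco i, hφk i])
      rw [hz1, hz2] at h
      simp at h
      linarith
    -- growth
    set P : ℝ := ∑ j, (A.mulVec u j) ^ 2 with hPdef
    have hPnn : 0 ≤ P := Finset.sum_nonneg (fun j _ => sq_nonneg _)
    set D : ℝ := ∑ i, (max (⟪afam (Sum.inr (Sum.inl i)), u⟫) 0
      + max (⟪afam (Sum.inr (Sum.inr i)), u⟫) 0) with hDdef
    have hDnn : 0 ≤ D :=
      Finset.sum_nonneg (fun i _ => add_nonneg (le_max_right _ _) (le_max_right _ _))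
    have hgrow : μ * P + γ * D ≤ gap := by
      have hkx := hkey x
      have hco : ∀ i, x i - xbar i = u i := by
        intro i; rw [hudef, PiLp.sub_apply]
      have hterm : ∀ i, γ * (max (⟪afam (Sum.inr (Sum.inl i)), u⟫) 0
          + max (⟪afam (Sum.inr (Sum.inr i)), u⟫) 0) ≤ φ i (u i) := by
        intro i
        rw [hafam]
        simp only [Sum.elim_inl, Sum.elim_inr]
        by_cases hxb : xbar i = 0
        · rw [if_pos hxb]
          have hwle := hkkt3 i hxb
          rcases lt_or_eq_of_le hwle with hwlt | hweq
          · have hne : w i ≠ -lam := by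
              intro h
              rw [h, abs_neg, abs_of_pos hlam] at hwlt
              exact lt_irrefl _ hwlt
            rw [if_neg hne, if_pos ⟨hxb, hwlt⟩, inner_neg_left, hinei]
            have habs : max (u i) 0 + max (-(u i)) 0 = |u i| := by
              rcases le_or_gt 0 (u i) with h | h
              · rw [max_eq_left h, max_eq_right (by linarith), abs_of_nonneg h]; ring
              · rw [max_eq_right (le_of_lt h), max_eq_left (by linarith), abs_of_neg h]; ring
            rw [habs]
            simp only [hφdef]
            rw [hxb, zero_add, abs_zero]
            have h1 : γ * |u i| ≤ (lam - |w i|) * |u i| :=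
              mul_le_mul_of_nonneg_right (hγle i hwlt) (abs_nonneg _)
            have h2 : -(|w i| * |u i|) ≤ w i * u i := by
              have := abs_mul (w i) (u i)
              have := neg_abs_le (w i * u i)
              nlinarith [abs_nonneg (w i), abs_nonneg (u i)]
            nlinarith
          · rcases abs_eq (le_of_lt hlam) |>.mp hweq with hwp | hwm
            · have hne : w i ≠ -lam := by rw [hwp]; intro h; linarith
              rw [if_neg hne, hinei]
              have hcond : ¬(xbar i = 0 ∧ |w i| < lam) := by
                intro h; rw [hweq] at h; exact lt_irrefl _ h.2
              rw [if_neg hcond, inner_zero_left]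
              simp only [hφdef]
              rw [hxb, zero_add, abs_zero, hwp]
              rw [max_self, add_zero]
              rcases le_or_gt 0 (u i) with h | h
              · rw [max_eq_left h, abs_of_nonneg h]
                nlinarith
              · rw [max_eq_right (le_of_lt h), abs_of_neg h]
                nlinarith
            · rw [if_pos hwm, inner_neg_left, hinei]
              have hcond : ¬(xbar i = 0 ∧ |w i| < lam) := by
                intro h; rw [hweq] at h; exact lt_irrefl _ h.2
              rw [if_neg hcond, inner_zero_left]
              simp only [hφdef]
              rw [hxb, zero_add, abs_zero, hwm]
              rw [max_self, add_zero]
              rcases le_or_gt 0 (u i) with h | h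
              · rw [max_eq_right (by linarith), abs_of_nonneg h]
                nlinarith
              · rw [max_eq_left (by linarith), abs_of_neg h]
                nlinarith
        · rw [if_neg hxb]
          have hcond : ¬(xbar i = 0 ∧ |w i| < lam) := fun h => hxb h.1
          rw [if_neg hcond, inner_zero_left]
          rw [max_self, add_zero, mul_zero]
          exact hφnn i (u i)
      have hsum : γ * D ≤ ∑ i, φ i (x i - xbar i) := by
        rw [hDdef, Finset.mul_sum]
        refine Finset.sum_le_sum (fun i _ => ?_)
        rw [hco i]
        exact hterm i
      have hPeq : ∑ j, (A.mulVec (x - xbar) j) ^ 2 = P := by rw [hPdef, hudef, WithLp.ofLp_sub]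
      rw [hgapdef, hkx, hPeq]
      linarith
    have hμP : μ * P ≤ gap := by nlinarith
    have hγD : γ * D ≤ gap := by nlinarith
    -- sum bound
    have hsum_le : ∑ jc, max (⟪afam jc, u⟫) 0 ≤ (m : ℝ) * Real.sqrt P + D := by
      rw [Fintype.sum_sum_type, Fintype.sum_sum_type, Fintype.sum_sum_type]
      have habs : ∀ j : Fin m, max (⟪afam (Sum.inl (Sum.inl j)), u⟫) 0
          + max (⟪afam (Sum.inl (Sum.inr j)), u⟫) 0 = |A.mulVec u j| := by
        intro j
        rw [hafam]
        simp only [Sum.elim_inl, Sum.elim_inr]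
        rw [hinrow, inner_neg_left, hinrow]
        rcases le_or_gt 0 (A.mulVec u j) with h | h
        · rw [max_eq_left h, max_eq_right (by linarith), abs_of_nonneg h]; ring
        · rw [max_eq_right (le_of_lt h), max_eq_left (by linarith), abs_of_neg h]; ring
      have h1 : ∑ j : Fin m, max (⟪afam (Sum.inl (Sum.inl j)), u⟫) 0
          + ∑ j : Fin m, max (⟪afam (Sum.inl (Sum.inr j)), u⟫) 0
          = ∑ j : Fin m, |A.mulVec u j| := by
        rw [← Finset.sum_add_distrib]
        exact Finset.sum_congr rfl (fun j _ => habs j)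
      have h2 : ∑ j : Fin m, |A.mulVec u j| ≤ (m : ℝ) * Real.sqrt P := by
        have hle : ∀ j : Fin m, |A.mulVec u j| ≤ Real.sqrt P := by
          intro j
          rw [← Real.sqrt_sq_eq_abs]
          apply Real.sqrt_le_sqrt
          rw [hPdef]
          exact Finset.single_le_sum (f := fun j => (A.mulVec u j) ^ 2)
            (fun j' _ => sq_nonneg _) (Finset.mem_univ j)
        calc ∑ j : Fin m, |A.mulVec u j| ≤ ∑ _j : Fin m, Real.sqrt P :=
              Finset.sum_le_sum (fun j _ => hle j)
          _ = (m : ℝ) * Real.sqrt P := by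
              rw [Finset.sum_const, Finset.card_univ, Fintype.card_fin, nsmul_eq_mul]
      have h3 : ∑ i : Fin n, max (⟪afam (Sum.inr (Sum.inl i)), u⟫) 0
          + ∑ i : Fin n, max (⟪afam (Sum.inr (Sum.inr i)), u⟫) 0 = D := by
        rw [hDdef, ← Finset.sum_add_distrib]
      linarith
    -- D is small
    have hD_small : D ≤ (n : ℝ) * ε := by
      rw [hDdef]
      have hle : ∀ i : Fin n, max (⟪afam (Sum.inr (Sum.inl i)), u⟫) 0
          + max (⟪afam (Sum.inr (Sum.inr i)), u⟫) 0 ≤ ε := by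
        intro i
        have huc : |u i| ≤ ε := le_trans (abs_coord_le_norm u i) hun
        rw [hafam]
        simp only [Sum.elim_inl, Sum.elim_inr]
        have habs1 : max (⟪(if xbar i = 0 then (if w i = -lam then -(ei i) else ei i) else 0), u⟫) 0 ≤ |u i| := by
          by_cases hxb : xbar i = 0
          · rw [if_pos hxb]
            by_cases hwm : w i = -lam
            · rw [if_pos hwm, inner_neg_left, hinei]
              rcases le_or_gt 0 (u i) with h | h
              · rw [max_eq_right (by linarith)]; exact abs_nonneg _
              · rw [max_eq_left (by linarith), abs_of_neg h]
            · rw [if_neg hwm, hinei]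
              rcases le_or_gt 0 (u i) with h | h
              · rw [max_eq_left h, abs_of_nonneg h]
              · rw [max_eq_right (le_of_lt h)]; exact abs_nonneg _
          · rw [if_neg hxb, inner_zero_left, max_self]; exact abs_nonneg _
        have habs2 : max (⟪(if xbar i = 0 ∧ |w i| < lam then -(ei i) else 0), u⟫) 0
            ≤ |u i| - max (⟪(if xbar i = 0 then (if w i = -lam then -(ei i) else ei i) else 0), u⟫) 0 := by
          by_cases hcond : xbar i = 0 ∧ |w i| < lam
          · rw [if_pos hcond, inner_neg_left, hinei]
            have hne : w i ≠ -lam := by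
              intro h
              rw [h, abs_neg, abs_of_pos hlam] at hcond
              exact lt_irrefl _ hcond.2
            rw [if_pos hcond.1, if_neg hne, hinei]
            rcases le_or_gt 0 (u i) with h | h
            · rw [max_eq_right (by linarith), max_eq_left h, abs_of_nonneg h]
              linarith
            · rw [max_eq_left (by linarith), max_eq_right (le_of_lt h), abs_of_neg h]
              linarith
          · rw [if_neg hcond, inner_zero_left, max_self]
            linarith [habs1]
        calc max _ 0 + max _ 0 ≤ |u i| := by linarith [habs1, habs2]
          _ ≤ ε := huc
      calc ∑ i : Fin n, (max (⟪afam (Sum.inr (Sum.inl i)), u⟫) 0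
            + max (⟪afam (Sum.inr (Sum.inr i)), u⟫) 0) ≤ ∑ _i : Fin n, ε :=
            Finset.sum_le_sum (fun i _ => hle i)
        _ = (n : ℝ) * ε := by
            rw [Finset.sum_const, Finset.card_univ, Fintype.card_fin, nsmul_eq_mul]
    -- main chain
    have hstep : gap ≤ ‖ξ‖ * (CH * ((m : ℝ) * Real.sqrt P + D)) := by
      have h1 := hsub (xbar + k)
      rw [hFk] at h1
      have he : (xbar + k) - x = -(u - k) := by rw [hudef]; abel
      rw [he, inner_neg_right] at h1
      have h2 : gap ≤ ⟪ξ, u - k⟫ := by rw [hgapdef]; linarith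
      have h3 : (0:ℝ) ≤ (m : ℝ) * Real.sqrt P + D :=
        add_nonneg (mul_nonneg (Nat.cast_nonneg m) (Real.sqrt_nonneg _)) hDnn
      calc gap ≤ ⟪ξ, u - k⟫ := h2
        _ ≤ ‖ξ‖ * ‖u - k‖ := real_inner_le_norm _ _
        _ ≤ ‖ξ‖ * (CH * ((m : ℝ) * Real.sqrt P + D)) := by
            apply mul_le_mul_of_nonneg_left _ (norm_nonneg ξ)
            refine le_trans hkbound ?_
            exact mul_le_mul_of_nonneg_left hsum_le (le_of_lt hCH)
    have hsqP : (m : ℝ) * Real.sqrt P ≤ ((m : ℝ) / Real.sqrt μ) * Real.sqrt gap := by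
      have h1 : P ≤ gap / μ := by
        rw [le_div_iff₀ hμ]; nlinarith
      have h2 : Real.sqrt P ≤ Real.sqrt (gap / μ) := Real.sqrt_le_sqrt h1
      rw [Real.sqrt_div hgap0 μ] at h2
      calc (m : ℝ) * Real.sqrt P ≤ (m : ℝ) * (Real.sqrt gap / Real.sqrt μ) :=
            mul_le_mul_of_nonneg_left h2 (Nat.cast_nonneg m)
        _ = ((m : ℝ) / Real.sqrt μ) * Real.sqrt gap := by ring
    have hsqD : D ≤ Real.sqrt ((n : ℝ) * ε / γ) * Real.sqrt gap := by
      have h1 : D ≤ gap / γ := by rw [le_div_iff₀ hγpos]; nlinarith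
      have h2 : D * D ≤ ((n : ℝ) * ε / γ) * gap := by
        have := mul_le_mul hD_small h1 hDnn (mul_nonneg (Nat.cast_nonneg n) (le_of_lt hεpos))
        calc D * D ≤ ((n : ℝ) * ε) * (gap / γ) := this
          _ = ((n : ℝ) * ε / γ) * gap := by ring
      calc D = Real.sqrt (D * D) := (Real.sqrt_mul_self hDnn).symm
        _ ≤ Real.sqrt (((n : ℝ) * ε / γ) * gap) := Real.sqrt_le_sqrt h2
        _ = Real.sqrt ((n : ℝ) * ε / γ) * Real.sqrt gap := Real.sqrt_mul
              (div_nonneg (mul_nonneg (Nat.cast_nonneg n) (le_of_lt hεpos)) (le_of_lt hγpos)) _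
    have hKbound : (m : ℝ) * Real.sqrt P + D ≤ Kc * Real.sqrt gap := by
      rw [hKcdef]
      have : (1 : ℝ) * Real.sqrt gap ≥ 0 := by positivity
      nlinarith [hsqP, hsqD, Real.sqrt_nonneg gap]
    have hfinal : gap ≤ ‖ξ‖ * (CH * Kc) * Real.sqrt gap := by
      calc gap ≤ ‖ξ‖ * (CH * ((m : ℝ) * Real.sqrt P + D)) := hstep
        _ ≤ ‖ξ‖ * (CH * (Kc * Real.sqrt gap)) := by
            apply mul_le_mul_of_nonneg_left _ (norm_nonneg ξ)
            exact mul_le_mul_of_nonneg_left hKbound (le_of_lt hCH)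
        _ = ‖ξ‖ * (CH * Kc) * Real.sqrt gap := by ring
    clear_value P D gap u
    rcases eq_or_lt_of_le (Real.sqrt_nonneg gap) with h0 | h0
    · rw [← h0, mul_zero]
      exact norm_nonneg ξ
    · have hsq : Real.sqrt gap * Real.sqrt gap = gap := Real.mul_self_sqrt hgap0
      have h1 : Real.sqrt gap ≤ ‖ξ‖ * (CH * Kc) := by nlinarith
      have h2 : (CH * Kc)⁻¹ * Real.sqrt gap ≤ (CH * Kc)⁻¹ * (‖ξ‖ * (CH * Kc)) :=
        mul_le_mul_of_nonneg_left h1 (inv_nonneg.mpr (le_of_lt (mul_pos hCH hKcpos)))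
      have hne0 : CH * Kc ≠ 0 := ne_of_gt (mul_pos hCH hKcpos)
      have h3 : (CH * Kc)⁻¹ * (‖ξ‖ * (CH * Kc)) = ‖ξ‖ := by
        field_simp
      linarith
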